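/- Let n > 2, k = 2^r + 1 with r ≥ 1 and r + 1 ≤ n. The genus of P_k(n) (the number of nonnegative integers not in P_k(n)) satisfies g(P_k(n)) ≥ k·(2^{n+1} + 2^{2n-1} + 2^{2n+r-1} - 2^{n-1}) + 2. -/

import Mathlib

namespace ProthAux

def s (q : ℕ) : ℕ := (Nat.digits 2 q).sum

lemma s_zero : s 0 = 0 := by simp [s]

lemma s_two_mul (c : ℕ) : s (2 * c) = s c := by
  rcases Nat.eq_zero_or_pos c with h | h
  · simp [h, s]
  · unfold s
    rw [Nat.digits_def' (by norm_num : 1 < 2) (by omega)]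
    simp [Nat.mul_div_cancel_left _ (by norm_num : 0 < 2)]

lemma s_two_mul_add_one (c : ℕ) : s (2 * c + 1) = s c + 1 := by
  unfold s
  rw [Nat.digits_def' (by norm_num : 1 < 2) (by omega)]
  have h1 : (2 * c + 1) % 2 = 1 := by omega
  have h2 : (2 * c + 1) / 2 = c := by omega
  rw [h1, h2]
  simp [Nat.add_comm]

lemma s_pow (i : ℕ) : s (2 ^ i) = 1 := by
  induction i with
  | zero => simp [s]
  | succ i ih => rw [pow_succ, mul_comm, s_two_mul, ih]

lemma s_succ (a : ℕ) : s (a + 1) ≤ s a + 1 := by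
  induction a using Nat.strong_induction_on with
  | _ a ih =>
    rcases Nat.even_or_odd a with ⟨c, hc⟩ | ⟨c, hc⟩
    · have hc' : a = 2 * c := by omega
      subst hc'
      rw [s_two_mul_add_one, s_two_mul]
    · have hc' : a = 2 * c + 1 := by omega
      subst hc'
      have h2 : 2 * c + 1 + 1 = 2 * (c + 1) := by ring
      rw [h2, s_two_mul, s_two_mul_add_one]
      have := ih c (by omega)
      omega

lemma s_add_pow (i : ℕ) : ∀ a, s (a + 2 ^ i) ≤ s a + 1 := by
  induction i with
  | zero => intro a; simpa using s_succ a
  | succ i ih =>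
    intro a
    rcases Nat.even_or_odd a with ⟨c, hc⟩ | ⟨c, hc⟩
    · have hc' : a = 2 * c := by omega
      subst hc'
      have h2 : 2 * c + 2 ^ (i + 1) = 2 * (c + 2 ^ i) := by ring
      rw [h2, s_two_mul, s_two_mul]
      exact ih c
    · have hc' : a = 2 * c + 1 := by omega
      subst hc'
      have h2 : 2 * c + 1 + 2 ^ (i + 1) = 2 * (c + 2 ^ i) + 1 := by ring
      rw [h2, s_two_mul_add_one, s_two_mul_add_one]
      have := ih c
      omega

lemma s_pow_mul (m x : ℕ) : s (2 ^ m * x) = s x := by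
  induction m with
  | zero => simp
  | succ m ih =>
    have h : 2 ^ (m + 1) * x = 2 * (2 ^ m * x) := by ring
    rw [h, s_two_mul, ih]

lemma s_multiset (l : Multiset ℕ) : s ((l.map (2 ^ ·)).sum) ≤ Multiset.card l := by
  induction l using Multiset.induction with
  | empty => simp [s_zero]
  | cons i l ih =>
    simp only [Multiset.map_cons, Multiset.sum_cons, Multiset.card_cons]
    calc s (2 ^ i + (l.map (2 ^ ·)).sum) ≤ s ((l.map (2 ^ ·)).sum) + 1 := by
          rw [add_comm]; exact s_add_pow i _
      _ ≤ Multiset.card l + 1 := by omega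

end ProthAux

open ProthAux in
theorem proth_genus_bound (n r : ℕ) (hn : 2 < n) (hr : 1 ≤ r) (hrn : r + 1 ≤ n) :
    Nat.card {m : ℕ | m ∉ AddSubmonoid.closure
        {m : ℕ | ∃ i : ℕ, m = (2 ^ r + 1) * 2 ^ (n + i) + 1}} ≥
      (2 ^ r + 1) * (2 ^ (n + 1) + 2 ^ (2 * n - 1) + 2 ^ (2 * n + r - 1) - 2 ^ (n - 1)) + 2 := by
  classical
  obtain ⟨p, rfl⟩ : ∃ p, n = p + 3 := ⟨n - 3, by omega⟩
  obtain ⟨j, rfl⟩ : ∃ j, r = j + 1 := ⟨r - 1, by omega⟩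
  set k : ℕ := 2 ^ (j + 1) + 1 with hk
  set K : ℕ := k * 2 ^ (p + 3) with hK
  set S := AddSubmonoid.closure {m : ℕ | ∃ i : ℕ, m = k * 2 ^ (p + 3 + i) + 1} with hSdef
  -- rewrite the subtraction-laden exponents
  simp only [show 2 * (p + 3) - 1 = 2 * p + 5 from by omega,
    show 2 * (p + 3) + (j + 1) - 1 = 2 * p + j + 6 from by omega,
    show p + 3 - 1 = p + 2 from by omega,
    show p + 3 + 1 = p + 4 from by omega]
  have hE : 2 ^ (p + 4) + 2 ^ (2 * p + 5) + 2 ^ (2 * p + j + 6) - 2 ^ (p + 2)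
      = 2 ^ (p + 2) * (3 + 2 ^ (p + 3) + 2 ^ (p + j + 4)) := by
    apply Nat.sub_eq_of_eq_add
    ring
  rw [hE]
  set G : ℕ := k * (2 ^ (p + 2) * (3 + 2 ^ (p + 3) + 2 ^ (p + j + 4))) + 2 with hG
  set M : ℕ := K * (K + 3) + 3 with hM
  clear_value k K S G M
  have hK24 : 24 ≤ K := by
    have h1 : 3 ≤ k := by rw [hk]; have := Nat.one_le_two_pow (n := j + 1); omega
    have h2 : 8 ≤ 2 ^ (p + 3) := by
      have := Nat.pow_le_pow_right (by norm_num : 1 ≤ 2) (show 3 ≤ p + 3 by omega)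
      simpa using this
    rw [hK]
    calc 24 = 3 * 8 := by norm_num
      _ ≤ k * 2 ^ (p + 3) := Nat.mul_le_mul h1 h2
  have hM2 : M + 1 = 2 * G := by rw [hM, hG, hK, hk]; ring
  have hG2 : 2 ≤ G := hG ▸ Nat.le_add_left 2 _
  -- every element of S has the form K * q + t with q a sum of t powers of two
  have hmem_pow : ∀ x ∈ S, ∃ l : Multiset ℕ,
      x = K * (l.map (2 ^ ·)).sum + Multiset.card l ∧
        Multiset.card l ≤ (l.map (2 ^ ·)).sum := by
    intro x hx
    rw [hSdef] at hx
    induction hx using AddSubmonoid.closure_induction with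
    | mem y hy =>
        obtain ⟨i, rfl⟩ := hy
        refine ⟨{i}, ?_, ?_⟩
        · simp only [Multiset.map_singleton, Multiset.sum_singleton,
            Multiset.card_singleton]
          rw [hK, pow_add]
          ring
        · simpa using Nat.one_le_two_pow
    | zero => exact ⟨0, by simp⟩
    | add x y hx' hy' ihx ihy =>
        obtain ⟨l₁, e₁, le₁⟩ := ihx
        obtain ⟨l₂, e₂, le₂⟩ := ihy
        refine ⟨l₁ + l₂, ?_, ?_⟩
        · simp only [Multiset.map_add, Multiset.sum_add, Multiset.card_add]
          rw [e₁, e₂]; ring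
        · simp only [Multiset.map_add, Multiset.sum_add, Multiset.card_add]
          omega
  -- M is not in S
  have hMnotin : M ∉ S := by
    intro hMS
    obtain ⟨l, hEq, hle⟩ := hmem_pow M hMS
    set Q := (l.map (2 ^ ·)).sum with hQdef
    set T := Multiset.card l with hTdef
    have hQ1 : Q ≤ K + 3 := by
      by_contra h
      push_neg at h
      have h1 : K * (K + 4) ≤ K * Q := Nat.mul_le_mul_left K (by omega)
      have h2 : K * (K + 4) = K * (K + 3) + K := by ring
      rw [hM] at hEq
      linarith
    have hQ2 : K + 3 ≤ Q := by
      by_contra h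
      push_neg at h
      have h1 : (K + 1) * Q = K * Q + Q := by ring
      have h2 : (K + 1) * Q ≤ (K + 1) * (K + 2) := Nat.mul_le_mul_left _ (by omega)
      have h3 : (K + 1) * (K + 2) = K * (K + 3) + 2 := by ring
      rw [hM] at hEq
      linarith
    have hQ : Q = K + 3 := le_antisymm hQ1 hQ2
    have hT : T = 3 := by
      rw [hQ] at hEq
      rw [hM] at hEq
      exact (Nat.add_left_cancel hEq).symm
    have hs3 : s (K + 3) ≤ 3 := by
      have := s_multiset l
      rw [← hQdef, ← hTdef, hQ, hT] at this
      exact this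
    have e : K + 3 = 2 * (2 * (2 ^ (p + 1) * k) + 1) + 1 := by rw [hK]; ring
    have hs4 : s (K + 3) = 4 := by
      rw [e, s_two_mul_add_one, s_two_mul_add_one, s_pow_mul, hk,
        show 2 ^ (j + 1) + 1 = 2 * 2 ^ j + 1 from by ring,
        s_two_mul_add_one, s_pow]
    omega
  -- cofiniteness via Chicken McNugget with generators K+1 and 2K+1
  have ha : K + 1 ∈ S := by
    rw [hSdef]
    apply AddSubmonoid.subset_closure
    exact ⟨0, by rw [hK]⟩
  have hb : 2 * K + 1 ∈ S := by
    rw [hSdef]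
    apply AddSubmonoid.subset_closure
    exact ⟨1, by rw [hK, show p + 3 + 1 = (p + 3) + 1 from rfl, pow_succ]; ring⟩
  have cop : Nat.Coprime (K + 1) (2 * K + 1) := by
    have h1 : (2 * K + 1) % (K + 1) = K := by
      have e : 2 * K + 1 = (K + 1) + K := by omega
      rw [e, Nat.add_mod_left, Nat.mod_eq_of_lt (by omega)]
    have h2 : (K + 1) % K = 1 := by
      rw [Nat.add_mod_left, Nat.mod_eq_of_lt (by omega)]
    unfold Nat.Coprime
    rw [Nat.gcd_rec, h1, Nat.gcd_rec, h2, Nat.gcd_one_left]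
  have frob := frobeniusNumber_pair cop (by omega) (by omega)
  have hclosAB : AddSubmonoid.closure ({K + 1, 2 * K + 1} : Set ℕ) ≤ S := by
    rw [hSdef]
    apply AddSubmonoid.closure_le.mpr
    rintro x hx
    simp only [Set.mem_insert_iff, Set.mem_singleton_iff] at hx
    rcases hx with rfl | rfl
    · rw [← hSdef]; exact ha
    · rw [← hSdef]; exact hb
  have hcof : ∀ x, (K + 1) * (2 * K + 1) ≤ x → x ∈ S := by
    intro x hx
    by_contra hxS
    have hx2 : x ∉ AddSubmonoid.closure ({K + 1, 2 * K + 1} : Set ℕ) :=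
      fun h => hxS (hclosAB h)
    have hub := frob.2 hx2
    have hden : (K + 1) + (2 * K + 1) ≤ (K + 1) * (2 * K + 1) :=
      Nat.add_le_mul (by omega) (by omega)
    obtain ⟨P, hP⟩ : ∃ P, (K + 1) * (2 * K + 1) = P := ⟨_, rfl⟩
    rw [hP] at hub hden hx
    omega
  -- the gap set
  have hGapSub : {m : ℕ | m ∉ S} ⊆ Set.Iio ((K + 1) * (2 * K + 1)) := by
    intro x hx
    by_contra h
    exact hx (hcof x (by simpa [Set.mem_Iio, not_lt] using h))
  have hfin : ({m : ℕ | m ∉ S} : Set ℕ).Finite := (Set.finite_Iio _).subset hGapSub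
  -- injection from range G into the gap set
  set g : ℕ → ℕ := fun x => if x ∈ S then M - x else x with hg
  have hmaps : ∀ x ∈ Finset.range G, g x ∈ hfin.toFinset := by
    intro x hx
    rw [Finset.mem_range] at hx
    rw [Set.Finite.mem_toFinset, Set.mem_setOf_eq]
    by_cases hxS : x ∈ S
    · simp only [hg, if_pos hxS]
      intro hMx
      apply hMnotin
      have : M = x + (M - x) := by omega
      rw [this]
      exact add_mem hxS hMx
    · simpa [hg, if_neg hxS] using hxS
  have hinj : Set.InjOn g (Finset.range G) := by
    intro x hx y hy hxy
    rw [Finset.coe_range, Set.mem_Iio] at hx hy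
    simp only [hg] at hxy
    by_cases hxS : x ∈ S <;> by_cases hyS : y ∈ S
    · rw [if_pos hxS, if_pos hyS] at hxy; omega
    · rw [if_pos hxS, if_neg hyS] at hxy; omega
    · rw [if_neg hxS, if_pos hyS] at hxy; omega
    · rw [if_neg hxS, if_neg hyS] at hxy; omega
  have hcard := Finset.card_le_card_of_injOn g hmaps hinj
  rw [Finset.card_range] at hcard
  have hNat : Nat.card {m : ℕ | m ∉ S} = hfin.toFinset.card := by
    rw [Nat.card_coe_set_eq, Set.ncard_eq_toFinset_card _ hfin]
  calc Nat.card {m : ℕ | m ∉ S} = hfin.toFinset.card := hNat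
    _ ≥ G := hcard
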